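/- (Casorati determinant D_1, type q-A_4^{(1)}.) Suppose Y ∈ ℂ[[X]] satisfies (1−a_1X)(1−a_2X)·Y(qX) = (1−b_1X)·Y, and let (P, Q) be a Padé pair for Y. Then there exists a polynomial R ∈ ℂ[X] with deg R ≤ 1 such that (1−b_1X)·P(X)·Q(qX) − (1−a_1X)(1−a_2X)·P(qX)·Q(X) = X^{m+n+1}·R. -/

import Mathlib

open Polynomial

lemma coe_comp_CqX (q : ℂ) (F : Polynomial ℂ) :
    ((F.comp (C q * X) : Polynomial ℂ) : PowerSeries ℂ) =
      PowerSeries.rescale q (F : PowerSeries ℂ) := by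
  induction F using Polynomial.induction_on' with
  | add p r hp hr => simp [add_comp, hp, hr]
  | monomial k a =>
    have h1 : (Polynomial.monomial k a).comp (C q * X) = Polynomial.monomial k (a * q ^ k) := by
      rw [← C_mul_X_pow_eq_monomial, ← C_mul_X_pow_eq_monomial]
      simp only [mul_comp, pow_comp, C_comp, X_comp, mul_pow, ← C_pow, map_mul]
      ring
    rw [h1]
    apply PowerSeries.ext; intro d
    simp only [PowerSeries.coeff_rescale, Polynomial.coeff_coe, Polynomial.coeff_monomial]
    split_ifs with h
    · subst h; ring
    · ring

/-- Casorati determinant `D_1` for type q-A_4^{(1)}. -/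
theorem casorati_D1_qA4
    (q a1 a2 b1 : ℂ) (m n : ℕ)
    (Y : PowerSeries ℂ)
    (hY : (1 - PowerSeries.C a1 * PowerSeries.X) * (1 - PowerSeries.C a2 * PowerSeries.X) *
        PowerSeries.rescale q Y =
      (1 - PowerSeries.C b1 * PowerSeries.X) * Y)
    (P Q : Polynomial ℂ) (hdP : P.degree ≤ m) (hdQ : Q.degree ≤ n)
    (hPade : (PowerSeries.X : PowerSeries ℂ) ^ (m + n + 1) ∣
      Y * (Q : PowerSeries ℂ) - (P : PowerSeries ℂ)) :
    ∃ R : Polynomial ℂ, R.degree ≤ 1 ∧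
      (1 - C b1 * X) * P * (Q.comp (C q * X)) -
          (1 - C a1 * X) * (1 - C a2 * X) * (P.comp (C q * X)) * Q =
        X ^ (m + n + 1) * R := by
  set N := m + n + 1 with hN
  set D : Polynomial ℂ :=
    (1 - C b1 * X) * P * (Q.comp (C q * X)) -
      (1 - C a1 * X) * (1 - C a2 * X) * (P.comp (C q * X)) * Q with hD
  -- key identity in power series
  have key : ((D : Polynomial ℂ) : PowerSeries ℂ) =
      (1 - PowerSeries.C a1 * PowerSeries.X) * (1 - PowerSeries.C a2 * PowerSeries.X) *
        (PowerSeries.rescale q (Y * (Q : PowerSeries ℂ) - (P : PowerSeries ℂ))) * (Q : PowerSeries ℂ) -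
      (1 - PowerSeries.C b1 * PowerSeries.X) * (Y * (Q : PowerSeries ℂ) - (P : PowerSeries ℂ)) *
        (PowerSeries.rescale q (Q : PowerSeries ℂ)) := by
    simp only [hD, Polynomial.coe_sub, Polynomial.coe_mul, Polynomial.coe_one, Polynomial.coe_C,
      Polynomial.coe_X, coe_comp_CqX, map_sub, map_mul]
    linear_combination -((Q : PowerSeries ℂ) * PowerSeries.rescale q (Q : PowerSeries ℂ)) * hY
  -- divisibility in power series
  have hdvdPS : (PowerSeries.X : PowerSeries ℂ) ^ N ∣ ((D : Polynomial ℂ) : PowerSeries ℂ) := by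
    rw [key]
    obtain ⟨u, hu⟩ := hPade
    apply dvd_sub
    · rw [hu, map_mul, map_pow, PowerSeries.rescale_X]
      exact Dvd.dvd.mul_right (Dvd.dvd.mul_left (Dvd.dvd.mul_right
        (pow_dvd_pow_of_dvd (dvd_mul_left _ _) N) _) _) _
    · rw [hu]
      exact Dvd.dvd.mul_right (Dvd.dvd.mul_left (Dvd.dvd.mul_right (dvd_refl _) _) _) _
  -- divisibility as polynomials
  have hdvdP : (X : Polynomial ℂ) ^ N ∣ D := by
    rw [Polynomial.X_pow_dvd_iff]
    intro d hd
    have := PowerSeries.X_pow_dvd_iff.mp hdvdPS d hd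
    simpa [Polynomial.coeff_coe] using this
  -- coefficient formula for comp
  have hcoeff : ∀ (F : Polynomial ℂ) (d : ℕ), (F.comp (C q * X)).coeff d = q ^ d * F.coeff d := by
    intro F d
    have := congrArg (PowerSeries.coeff d) (coe_comp_CqX q F)
    simpa [Polynomial.coeff_coe, PowerSeries.coeff_rescale] using this
  -- degree bound for comp
  have hcompdeg : ∀ (F : Polynomial ℂ) (k : ℕ), F.degree ≤ k → (F.comp (C q * X)).degree ≤ k := by
    intro F k hF
    rw [Polynomial.degree_le_iff_coeff_zero] at hF ⊢
    intro d hd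
    rw [hcoeff, hF d hd, mul_zero]
  have h1 : (1 - C b1 * X : Polynomial ℂ).degree ≤ 1 := by compute_degree
  have h2 : (1 - C a1 * X : Polynomial ℂ).degree ≤ 1 := by compute_degree
  have h3 : (1 - C a2 * X : Polynomial ℂ).degree ≤ 1 := by compute_degree
  have hDdeg : D.degree ≤ (N + 1 : ℕ) := by
    rw [hD]
    apply le_trans (degree_sub_le _ _)
    rw [max_le_iff]
    constructor
    · apply le_trans (degree_mul_le _ _)
      apply le_trans (add_le_add (le_trans (degree_mul_le _ _) (add_le_add h1 hdP))
        (hcompdeg Q n hdQ))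
      rw [hN]
      exact_mod_cast (by omega : 1 + m + n ≤ m + n + 1 + 1)
    · apply le_trans (degree_mul_le _ _)
      apply le_trans (add_le_add (le_trans (degree_mul_le _ _)
        (add_le_add (le_trans (degree_mul_le _ _) (add_le_add h2 h3)) (hcompdeg P m hdP))) hdQ)
      rw [hN]
      exact_mod_cast (by omega : 1 + 1 + m + n ≤ m + n + 1 + 1)
  obtain ⟨R, hR⟩ := hdvdP
  refine ⟨R, ?_, hR⟩
  by_cases hR0 : R = 0
  · simp [hR0]
  · rw [hR, degree_mul, degree_X_pow] at hDdeg
    rw [Polynomial.degree_eq_natDegree hR0] at hDdeg ⊢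
    rw [← Nat.cast_add] at hDdeg
    exact_mod_cast Nat.le_of_add_le_add_left (by exact_mod_cast hDdeg)
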